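/- arXiv:2306.15034 — 2 statements merged into one kernel-verified Lean document; each statement's English description precedes it below -/
import Mathlib

section
/- Let A be a finite-dimensional evolution algebra with natural basis B = {e_i}_{i in Λ}. Then for every positive integer i, the i-th term of the upper annihilating series satisfies ann^{(i)}(A) = span{e_j : j in λ_i(B)}, where λ_1(B) = {j : e_j^2 = 0} and λ_k(B) = {j : D^1(j) ⊆ λ_{k-1}(B)} for k > 1. -/
open Submodule

section EvolutionPreamble

/-- The set of `k`-th generation descendants of a vertex in a directed graph
given by an edge relation `E`; `Dk E 0 i = {i}`. -/
def Dk {V : Type*} (E : V → V → Prop) : ℕ → V → Set V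
  | 0, i => {i}
  | n + 1, i => {k | ∃ j ∈ Dk E n i, E j k}

/-- A vertex is cyclic if there is a (possibly trivial) path from it to a vertex
lying on a cycle. -/
def IsCyclicVertex {V : Type*} (E : V → V → Prop) (i : V) : Prop :=
  ∃ j, Relation.ReflTransGen E i j ∧ Relation.TransGen E j j

/-- Connectedness of a directed graph: every nontrivial partition of the
vertex set is crossed by an edge (in one direction or the other). -/
def GraphConnected {V : Type*} (E : V → V → Prop) : Prop :=
  ∀ s : Set V, s.Nonempty → sᶜ.Nonempty → ∃ x ∈ s, ∃ y ∈ sᶜ, E x y ∨ E y x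

variable {K : Type*} [Field K] {A : Type*} [NonUnitalNonAssocRing A]
  [Module K A] [SMulCommClass K A A] [IsScalarTower K A A] {ι : Type*}

/-- A basis is natural if distinct basis vectors multiply to zero. -/
def IsNaturalBasis (B : Module.Basis ι K A) : Prop := ∀ i j, i ≠ j → B i * B j = 0

/-- Edge relation of the directed graph `Γ(A,B)` associated to an evolution
algebra `A` with natural basis `B`: `(i,k)` is an edge iff the structure
constant `w_{ik}` is nonzero. -/
def edge (B : Module.Basis ι K A) (i k : ι) : Prop := B.repr (B i * B i) k ≠ 0

/-- First-generation descendants in `Γ(A,B)`. -/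
def D1 (B : Module.Basis ι K A) (i : ι) : Set ι := {k | edge B i k}

/-- The increasing chain of index sets `λ_k(B)`: `λ_0 = ∅`,
`λ_{k+1}(B) = {i : D¹(i) ⊆ λ_k(B)}`.  In particular
`λ_1(B) = {i : e_i² = 0}`. -/
def lam (B : Module.Basis ι K A) : ℕ → Set ι
  | 0 => ∅
  | n + 1 => {i | ∀ k, edge B i k → k ∈ lam B n}

/-- `I` is a (two-sided) ideal. -/
def IsIdeal (I : Submodule K A) : Prop := ∀ x ∈ I, ∀ a : A, x * a ∈ I ∧ a * x ∈ I

/-- The absorption property: `xA ⊆ I` implies `x ∈ I`. -/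
def HasAbsorption (I : Submodule K A) : Prop := ∀ x : A, (∀ a : A, x * a ∈ I) → x ∈ I

/-- The absorption radical: intersection of all ideals with the absorption property. -/
def rad (K : Type*) (A : Type*) [Field K] [NonUnitalNonAssocRing A]
    [Module K A] [SMulCommClass K A A] [IsScalarTower K A A] : Submodule K A :=
  sInf {I : Submodule K A | IsIdeal I ∧ HasAbsorption I}

lemma rad_isIdeal : IsIdeal (rad K A) := by
  intro x hx a
  rw [rad, Submodule.mem_sInf] at hx
  constructor <;>
    · rw [rad, Submodule.mem_sInf]
      intro I hI
      first
        | exact (hI.1 x (hx I hI) a).1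
        | exact (hI.1 x (hx I hI) a).2

/-- The annihilator `ann(A) = {x : xA = Ax = 0}` as a submodule. -/
def annSub (K : Type*) (A : Type*) [Field K] [NonUnitalNonAssocRing A]
    [Module K A] [SMulCommClass K A A] [IsScalarTower K A A] : Submodule K A where
  carrier := {x | ∀ a : A, x * a = 0 ∧ a * x = 0}
  add_mem' := by
    intro x y hx hy a
    constructor
    · rw [add_mul, (hx a).1, (hy a).1, add_zero]
    · rw [mul_add, (hx a).2, (hy a).2, add_zero]
  zero_mem' := by intro a; simp
  smul_mem' := by
    intro c x hx a
    constructor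
    · rw [smul_mul_assoc, (hx a).1, smul_zero]
    · rw [mul_smul_comm, (hx a).2, smul_zero]

/-- The upper annihilating series: `ann⁰(A) = 0`,
`annⁱ⁺¹(A) = {x : xA ∪ Ax ⊆ annⁱ(A)}`. -/
def annSeries (K : Type*) (A : Type*) [Field K] [NonUnitalNonAssocRing A]
    [Module K A] [SMulCommClass K A A] [IsScalarTower K A A] : ℕ → Submodule K A
  | 0 => ⊥
  | n + 1 =>
    { carrier := {x | ∀ a : A, x * a ∈ annSeries K A n ∧ a * x ∈ annSeries K A n}
      add_mem' := by
        intro x y hx hy a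
        constructor
        · rw [add_mul]; exact add_mem (hx a).1 (hy a).1
        · rw [mul_add]; exact add_mem (hx a).2 (hy a).2
      zero_mem' := by intro a; simp
      smul_mem' := by
        intro c x hx a
        constructor
        · rw [smul_mul_assoc]; exact smul_mem _ c (hx a).1
        · rw [mul_smul_comm]; exact smul_mem _ c (hx a).2 }

/-- The annihilator stabilizing index `asi(A)`. -/
noncomputable def asi (K : Type*) (A : Type*) [Field K] [NonUnitalNonAssocRing A]
    [Module K A] [SMulCommClass K A A] [IsScalarTower K A A] : ℕ :=
  sInf {q : ℕ | annSeries K A q = annSeries K A (q + 1)}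

/-- Product of two submodules (span of pairwise products). -/
def smulSub (I J : Submodule K A) : Submodule K A :=
  Submodule.span K (Set.image2 (· * ·) (I : Set A) (J : Set A))

/-- Powers of a subalgebra/ideal, with `N^{k} = Σ_{i+j=k, i,j ≥ 1} Nⁱ Nʲ`. -/
def npow (I : Submodule K A) : ℕ → Submodule K A
  | 0 => ⊥
  | 1 => I
  | n + 2 => ⨆ i : Fin (n + 1), smulSub (npow I (i.1 + 1)) (npow I (n + 1 - i.1))
  termination_by n => n
  decreasing_by
  · have := i.isLt; omega
  · have := i.isLt; omega

/-- `I` is an ideal of the subalgebra `N`. -/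
def IsIdealIn (N I : Submodule K A) : Prop :=
  I ≤ N ∧ ∀ x ∈ I, ∀ a ∈ N, x * a ∈ I ∧ a * x ∈ I

/-- The (sub)algebra `N` is decomposable: it is the direct sum of two nonzero
ideals of `N`. -/
def DecomposableIn (N : Submodule K A) : Prop :=
  ∃ I J : Submodule K A, IsIdealIn N I ∧ IsIdealIn N J ∧ I ≠ ⊥ ∧ J ≠ ⊥ ∧
    I ⊓ J = ⊥ ∧ I ⊔ J = N

/-- Multiplication inside an ideal `N` (an ideal is closed under products). -/
def subMul {N : Submodule K A} (hN : IsIdeal N) (x y : N) : N :=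
  ⟨(x : A) * (y : A), (hN x x.2 y).1⟩

/-- The induced multiplication on the quotient `A ⧸ I` by an ideal `I`. -/
def quotMul (I : Submodule K A) (hI : IsIdeal I) (x y : A ⧸ I) : A ⧸ I :=
  Quotient.liftOn₂ x y (fun a b => Submodule.Quotient.mk (a * b)) (by
    intro a b a' b' ha hb
    have ha' : a - a' ∈ I := (Submodule.quotientRel_def I).mp ha
    have hb' : b - b' ∈ I := (Submodule.quotientRel_def I).mp hb
    refine (Submodule.Quotient.eq I).mpr ?_
    have h : a * b - a' * b' = a * (b - b') + (a - a') * b' := by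
      rw [mul_sub, sub_mul]; abel
    rw [h]
    exact add_mem (hI _ hb' a).2 (hI _ ha' b').1)

/-- Edge relation of the graph associated to the quotient evolution algebra
`A ⧸ I` relative to a basis `C`. -/
def edgeQ {κ : Type*} (I : Submodule K A) (hI : IsIdeal I)
    (C : Module.Basis κ K (A ⧸ I)) (i k : κ) : Prop :=
  C.repr (quotMul I hI (C i) (C i)) k ≠ 0

end EvolutionPreamble

section AuxProof

variable {K : Type*} [Field K] {A : Type*} [NonUnitalNonAssocRing A]
  [Module K A] [SMulCommClass K A A] [IsScalarTower K A A] {ι : Type*} [Fintype ι]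

lemma mem_annSeries_succ {n : ℕ} {x : A} :
    x ∈ annSeries K A (n + 1) ↔
      ∀ a : A, x * a ∈ annSeries K A n ∧ a * x ∈ annSeries K A n := Iff.rfl

lemma mul_basis_eq (B : Module.Basis ι K A) (hB : IsNaturalBasis B) (x : A) (k : ι) :
    x * B k = B.repr x k • (B k * B k) := by
  conv_lhs => rw [← B.sum_repr x]
  rw [Finset.sum_mul, Finset.sum_eq_single k]
  · rw [smul_mul_assoc]
  · intro j _ hj; rw [smul_mul_assoc, hB j k hj, smul_zero]
  · intro h; exact absurd (Finset.mem_univ k) h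

lemma basis_mul_eq (B : Module.Basis ι K A) (hB : IsNaturalBasis B) (x : A) (k : ι) :
    B k * x = B.repr x k • (B k * B k) := by
  conv_lhs => rw [← B.sum_repr x]
  rw [Finset.mul_sum, Finset.sum_eq_single k]
  · rw [mul_smul_comm]
  · intro j _ hj; rw [mul_smul_comm, hB k j (Ne.symm hj), smul_zero]
  · intro h; exact absurd (Finset.mem_univ k) h

lemma annSeries_eq_span (B : Module.Basis ι K A) (hB : IsNaturalBasis B) :
    ∀ n, annSeries K A n = Submodule.span K (B '' lam B n)
  | 0 => by simp [annSeries, lam]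
  | (n + 1) => by
    have IH := annSeries_eq_span B hB n
    apply le_antisymm
    · intro x hx
      have hx' : ∀ a : A, x * a ∈ Submodule.span K (B '' lam B n) :=
        fun a => IH ▸ (mem_annSeries_succ.mp hx a).1
      rw [Module.Basis.mem_span_image]
      intro k hk
      simp only [Finset.mem_coe, Finsupp.mem_support_iff] at hk
      have h1 := hx' (B k)
      rw [mul_basis_eq B hB] at h1
      have h2 : B k * B k ∈ Submodule.span K (B '' lam B n) :=
        (Submodule.smul_mem_iff _ hk).mp h1
      rw [Module.Basis.mem_span_image] at h2
      intro m hm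
      exact h2 (Finsupp.mem_support_iff.mpr hm)
    · rw [Submodule.span_le]
      rintro _ ⟨j, hj, rfl⟩
      have hsq : B j * B j ∈ annSeries K A n := by
        rw [IH, Module.Basis.mem_span_image]
        intro m hm
        exact hj m (Finsupp.mem_support_iff.mp hm)
      rw [SetLike.mem_coe, mem_annSeries_succ]
      intro a
      constructor
      · rw [basis_mul_eq B hB]
        exact Submodule.smul_mem _ _ hsq
      · rw [mul_basis_eq B hB]
        exact Submodule.smul_mem _ _ hsq

end AuxProof

/-- The terms of the upper annihilating series are spanned by the basis
elements indexed by `λ_i(B)`. -/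
theorem stmt4 {K : Type*} [Field K] {A : Type*} [NonUnitalNonAssocRing A]
    [Module K A] [SMulCommClass K A A] [IsScalarTower K A A]
    {ι : Type*} [Fintype ι] (B : Module.Basis ι K A) (hB : IsNaturalBasis B)
    (i : ℕ) (hi : 1 ≤ i) :
    annSeries K A i = Submodule.span K (B '' lam B i) := by
  exact annSeries_eq_span B hB i
end

section
/- Let A be a finite-dimensional nilpotent evolution algebra with dim(ann(A)) = 1. Then A is indecomposable, i.e., A cannot be written as a direct sum of two nonzero ideals. -/
open Submodule

section AuxLemmas

variable {K : Type*} [Field K] {A : Type*} [NonUnitalNonAssocRing A]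
  [Module K A] [SMulCommClass K A A] [IsScalarTower K A A]

lemma smulSub_mono {I I' J J' : Submodule K A} (h1 : I ≤ I') (h2 : J ≤ J') :
    smulSub I J ≤ smulSub I' J' :=
  Submodule.span_mono (Set.image2_subset h1 h2)

lemma mul_mem_smulSub {I J : Submodule K A} {x y : A} (hx : x ∈ I) (hy : y ∈ J) :
    x * y ∈ smulSub I J :=
  Submodule.subset_span (Set.mem_image2_of_mem hx hy)

/-- The chain `I, IA + AI, ...` associated with an ideal `I`. -/
def chainJ (I : Submodule K A) : ℕ → Submodule K A
  | 0 => I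
  | n + 1 => smulSub (chainJ I n) ⊤ ⊔ smulSub ⊤ (chainJ I n)

lemma chainJ_le_npow (I : Submodule K A) : ∀ n, chainJ I n ≤ npow (⊤ : Submodule K A) (n + 1)
  | 0 => by rw [npow]; exact le_top
  | n + 1 => by
    have hrec := chainJ_le_npow I n
    have htop : (⊤ : Submodule K A) = npow (⊤ : Submodule K A) 1 := by rw [npow]
    have hsub : n + 1 - n = 1 := by omega
    rw [show n + 1 + 1 = n + 2 from rfl, npow]
    refine sup_le ?_ ?_
    · refine le_trans ?_ (le_iSup _ (⟨n, by omega⟩ : Fin (n + 1)))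
      simp only [hsub]
      exact smulSub_mono hrec (by rw [npow])
    · refine le_trans ?_ (le_iSup _ (⟨0, by omega⟩ : Fin (n + 1)))
      simp only [Nat.sub_zero]
      exact smulSub_mono (by rw [npow]) hrec

lemma chainJ_le_self {I : Submodule K A} (hI : IsIdealIn (⊤ : Submodule K A) I) :
    ∀ n, chainJ I n ≤ I
  | 0 => le_rfl
  | n + 1 => by
    have hrec := chainJ_le_self hI n
    refine sup_le ?_ ?_ <;>
    · rw [smulSub, Submodule.span_le]
      rintro _ ⟨x, hx, y, hy, rfl⟩
      first
        | exact (hI.2 x (hrec hx) y trivial).1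
        | exact (hI.2 y (hrec hy) x trivial).2

lemma chainJ_ann {I : Submodule K A} {m : ℕ} (h : chainJ I (m + 1) = ⊥) :
    chainJ I m ≤ annSub K A := by
  intro x hx
  intro a
  constructor
  · have : x * a ∈ chainJ I (m + 1) :=
      le_sup_left (α := Submodule K A) (mul_mem_smulSub hx (Submodule.mem_top))
    rw [h] at this; exact this
  · have : a * x ∈ chainJ I (m + 1) :=
      le_sup_right (α := Submodule K A) (mul_mem_smulSub (Submodule.mem_top) hx)
    rw [h] at this; exact this

lemma exists_step (f : ℕ → Submodule K A) (h0 : f 0 ≠ ⊥) :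
    ∀ n, f n = ⊥ → ∃ m, f m ≠ ⊥ ∧ f (m + 1) = ⊥
  | 0, h => absurd h h0
  | n + 1, h => by
    by_cases hn : f n = ⊥
    · exact exists_step f h0 n hn
    · exact ⟨n, hn, h⟩

/-- In a nilpotent algebra, every nonzero ideal meets the annihilator nontrivially. -/
lemma ideal_meets_ann {I : Submodule K A}
    (hI : IsIdealIn (⊤ : Submodule K A) I) (hIne : I ≠ ⊥)
    (hnil : ∃ k : ℕ, 0 < k ∧ npow (⊤ : Submodule K A) k = ⊥) :
    ∃ x : A, x ≠ 0 ∧ x ∈ I ∧ x ∈ annSub K A := by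
  obtain ⟨k, hk, hbot⟩ := hnil
  obtain ⟨n, rfl⟩ : ∃ n, k = n + 1 := ⟨k - 1, by omega⟩
  have hchain : chainJ I n = ⊥ :=
    le_antisymm (le_trans (chainJ_le_npow I n) hbot.le) bot_le
  obtain ⟨m, hm, hm1⟩ := exists_step (chainJ I) (by simpa [chainJ] using hIne) n hchain
  obtain ⟨x, hxmem, hxne⟩ := Submodule.exists_mem_ne_zero_of_ne_bot hm
  exact ⟨x, hxne, chainJ_le_self hI m hxmem, chainJ_ann hm1 hxmem⟩

end AuxLemmas

/-- A nilpotent evolution algebra with one-dimensional annihilator is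
indecomposable. -/
theorem stmt17 {K : Type*} [Field K] {A : Type*} [NonUnitalNonAssocRing A]
    [Module K A] [SMulCommClass K A A] [IsScalarTower K A A]
    {ι : Type*} [Fintype ι] (B : Module.Basis ι K A) (hB : IsNaturalBasis B)
    (hnil : ∃ k : ℕ, 0 < k ∧ npow (⊤ : Submodule K A) k = ⊥)
    (hann : Module.finrank K (annSub K A) = 1) :
    ¬ DecomposableIn (⊤ : Submodule K A) := by
  rintro ⟨I, J, hI, hJ, hIne, hJne, hIJ, -⟩
  obtain ⟨x, hxne, hxI, hxann⟩ := ideal_meets_ann hI hIne hnil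
  obtain ⟨y, hyne, hyJ, hyann⟩ := ideal_meets_ann hJ hJne hnil
  have hv := (finrank_eq_one_iff_of_nonzero' (⟨x, hxann⟩ : annSub K A)
    (by simpa using hxne)).mp hann
  obtain ⟨d, hd⟩ := hv ⟨y, hyann⟩
  have hdy : d • x = y := congrArg Subtype.val hd
  have hmem : y ∈ I ⊓ J := ⟨by rw [← hdy]; exact Submodule.smul_mem I d hxI, hyJ⟩
  rw [hIJ, Submodule.mem_bot] at hmem
  exact hyne hmem
end
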